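/- For a connected graph G on n ≥ 3 vertices, γ₃(G) + κ(G) = 2n − 2 if and only if G is isomorphic to K₄, C₄, or K_{1,2} (the path on 3 vertices). -/

import Mathlib

/-- `S` is a 3-dominating set of `G`: every vertex outside `S`
has at least three neighbors in `S`. -/
def ThreeDominating {V : Type*} (G : SimpleGraph V) (S : Finset V) : Prop :=
  ∀ v ∉ S, 3 ≤ {u | u ∈ S ∧ G.Adj v u}.ncard

/-- The 3-domination number: minimum cardinality of a 3-dominating set. -/
noncomputable def gamma3 {V : Type*} [Fintype V] (G : SimpleGraph V) : ℕ :=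
  sInf {k | ∃ S : Finset V, ThreeDominating G S ∧ S.card = k}

/-- Vertex connectivity: minimum number of vertices whose removal
results in a disconnected or trivial graph. -/
noncomputable def kappa {V : Type*} [Fintype V] [DecidableEq V] (G : SimpleGraph V) : ℕ :=
  sInf {k | ∃ S : Finset V, S.card = k ∧
    (((Sᶜ : Finset V)).card ≤ 1 ∨ ¬ (G.induce (↑(Sᶜ : Finset V) : Set V)).Connected)}

set_option linter.unusedSectionVars false
set_option maxHeartbeats 1000000

open SimpleGraph Finset

section Generic

variable {V : Type*} [Fintype V] [DecidableEq V] {G : SimpleGraph V}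

lemma threeDominating_iff [DecidableRel G.Adj] {S : Finset V} :
    ThreeDominating G S ↔ ∀ v ∉ S, 3 ≤ (S.filter (fun u => G.Adj v u)).card := by
  unfold ThreeDominating
  refine forall₂_congr fun v hv => ?_
  rw [show {u | u ∈ S ∧ G.Adj v u} = ↑(S.filter fun u => G.Adj v u) by ext u; simp,
    Set.ncard_coe_finset]

lemma gamma3_le {S : Finset V} (h : ThreeDominating G S) : gamma3 G ≤ S.card :=
  Nat.sInf_le ⟨S, h, rfl⟩

lemma threeDominating_univ : ThreeDominating G Finset.univ := fun v hv => absurd (mem_univ v) hv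

lemma gamma3_le_card : gamma3 G ≤ Fintype.card V := by
  simpa using gamma3_le (G := G) threeDominating_univ

lemma gamma3_exists : ∃ S : Finset V, ThreeDominating G S ∧ S.card = gamma3 G := by
  obtain ⟨S, h1, h2⟩ := Nat.sInf_mem (s := {k | ∃ S : Finset V, ThreeDominating G S ∧ S.card = k})
    ⟨Fintype.card V, Finset.univ, threeDominating_univ, by simp⟩
  exact ⟨S, h1, h2⟩

lemma le_gamma3 {m : ℕ} (h : ∀ S : Finset V, ThreeDominating G S → m ≤ S.card) :
    m ≤ gamma3 G := by
  obtain ⟨S, hS, hc⟩ := gamma3_exists (G := G)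
  exact hc ▸ h S hS

lemma three_le_gamma3 (hn : 3 ≤ Fintype.card V) : 3 ≤ gamma3 G := by
  refine le_gamma3 fun S hS => ?_
  by_contra h
  push_neg at h
  have hlt : S.card < Fintype.card V := by omega
  have hne : (Sᶜ : Finset V).Nonempty := by
    rw [← Finset.card_pos, Finset.card_compl]; omega
  obtain ⟨v, hv⟩ := hne
  rw [Finset.mem_compl] at hv
  have h3 := hS v hv
  have hsub : {u | u ∈ S ∧ G.Adj v u} ⊆ ↑S := fun u hu => hu.1
  have := Set.ncard_le_ncard hsub (Set.toFinite _)
  rw [Set.ncard_coe_finset] at this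
  omega

lemma gamma3_le_pred {v : V} (h : 3 ≤ (G.neighborSet v).ncard) :
    gamma3 G ≤ Fintype.card V - 1 := by
  have hd : ThreeDominating G (Finset.univ.erase v) := by
    intro w hw
    have hwv : w = v := by
      by_contra hne
      exact hw (Finset.mem_erase.mpr ⟨hne, mem_univ w⟩)
    subst hwv
    have hset : {u | u ∈ Finset.univ.erase w ∧ G.Adj w u} = G.neighborSet w := by
      ext u
      simp only [Set.mem_setOf_eq, Finset.mem_erase, mem_univ, and_true, mem_neighborSet]
      exact ⟨fun h => h.2, fun h => ⟨(G.ne_of_adj h).symm, h⟩⟩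
    rw [hset]
    exact h
  have := gamma3_le hd
  rwa [Finset.card_erase_of_mem (mem_univ v), Finset.card_univ] at this

lemma kappa_le {S : Finset V}
    (h : (Sᶜ : Finset V).card ≤ 1 ∨ ¬ (G.induce (↑(Sᶜ : Finset V) : Set V)).Connected) :
    kappa G ≤ S.card :=
  Nat.sInf_le ⟨S, rfl, h⟩

lemma kappa_exists : ∃ S : Finset V, S.card = kappa G ∧
    ((Sᶜ : Finset V).card ≤ 1 ∨ ¬ (G.induce (↑(Sᶜ : Finset V) : Set V)).Connected) := by
  obtain ⟨S, h1, h2⟩ := Nat.sInf_mem (s := {k | ∃ S : Finset V, S.card = k ∧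
    (((Sᶜ : Finset V)).card ≤ 1 ∨ ¬ (G.induce (↑(Sᶜ : Finset V) : Set V)).Connected)})
    ⟨Fintype.card V, Finset.univ, by simp⟩
  exact ⟨S, h1, h2⟩

lemma le_kappa {m : ℕ}
    (h : ∀ S : Finset V, S.card < m →
      2 ≤ (Sᶜ : Finset V).card ∧ (G.induce (↑(Sᶜ : Finset V) : Set V)).Preconnected) :
    m ≤ kappa G := by
  by_contra hlt
  push_neg at hlt
  obtain ⟨S, hc, hd⟩ := kappa_exists (G := G)
  obtain ⟨h2, hpre⟩ := h S (by omega)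
  have hne : Nonempty (↑(Sᶜ : Finset V) : Set V) := by
    have : (Sᶜ : Finset V).Nonempty := Finset.card_pos.mp (by omega)
    obtain ⟨x, hx⟩ := this
    exact ⟨⟨x, hx⟩⟩
  rcases hd with h1 | h1
  · omega
  · exact h1 ⟨hpre⟩

lemma kappa_le_card_sub_one [Nonempty V] : kappa G ≤ Fintype.card V - 1 := by
  obtain ⟨v⟩ := ‹Nonempty V›
  have := kappa_le (G := G) (S := Finset.univ.erase v) (Or.inl (by simp))
  rwa [Finset.card_erase_of_mem (mem_univ v), Finset.card_univ] at this

lemma adj_of_reachable_ne {W : Type*} {G' : SimpleGraph W} {x y : W}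
    (h : G'.Reachable x y) (hne : x ≠ y) : ∃ z, G'.Adj x z := by
  obtain ⟨w⟩ := h
  cases w with
  | nil => exact absurd rfl hne
  | cons h p => exact ⟨_, h⟩

lemma not_connected_pair {u v : V} (hne : u ≠ v) (hna : ¬ G.Adj u v) :
    ¬ (G.induce ({u, v} : Set V)).Connected := by
  intro h
  have hu : u ∈ ({u, v} : Set V) := by simp
  have hv : v ∈ ({u, v} : Set V) := by simp
  have hr := h.preconnected ⟨u, hu⟩ ⟨v, hv⟩
  obtain ⟨z, hz⟩ := adj_of_reachable_ne hr (by simp [Subtype.ext_iff]; exact hne)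
  have hadj : G.Adj u ↑z := hz
  have hzm := z.2
  rcases hzm with h1 | h1
  · exact G.ne_of_adj hadj (by simp [h1])
  · simp only [Set.mem_singleton_iff] at h1
    exact hna (h1 ▸ hadj)

lemma kappa_le_of_not_adj {u v : V} (hne : u ≠ v) (hna : ¬ G.Adj u v) :
    kappa G ≤ Fintype.card V - 2 := by
  have hcompl : ((Finset.univ \ {u, v} : Finset V)ᶜ : Finset V) = {u, v} := by
    ext x; simp; tauto
  have hcard : ({u, v} : Finset V).card = 2 := by
    rw [Finset.card_insert_of_notMem (by simpa using hne), Finset.card_singleton]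
  have hd : ¬ (G.induce (↑((Finset.univ \ {u, v} : Finset V)ᶜ : Finset V) : Set V)).Connected := by
    rw [hcompl]
    have : (↑({u, v} : Finset V) : Set V) = ({u, v} : Set V) := by simp
    rw [this]
    exact not_connected_pair hne hna
  have := kappa_le (Or.inr hd)
  rwa [Finset.card_sdiff_of_subset (Finset.subset_univ _), Finset.card_univ, hcard] at this

lemma kappa_le_nbr (v : V) : kappa G ≤ (G.neighborSet v).ncard := by
  classical
  have hnc : (G.neighborSet v).ncard = (G.neighborSet v).toFinset.card :=
    Set.ncard_eq_toFinset_card' _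
  set S := (G.neighborSet v).toFinset with hS
  by_cases h1 : (Sᶜ : Finset V).card ≤ 1
  · rw [hnc]; exact kappa_le (G := G) (S := S) (Or.inl h1)
  · push_neg at h1
    have hv : v ∈ (Sᶜ : Finset V) := by simp [hS]
    obtain ⟨w, hw, hwv⟩ : ∃ w ∈ (Sᶜ : Finset V), w ≠ v := by
      by_contra hc
      push_neg at hc
      have : (Sᶜ : Finset V) ⊆ {v} := fun x hx => by simp [hc x hx]
      have := Finset.card_le_card this
      simp at this; omega
    have hd : ¬ (G.induce (↑(Sᶜ : Finset V) : Set V)).Connected := by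
      intro h
      have hr := h.preconnected ⟨v, hv⟩ ⟨w, hw⟩
      obtain ⟨z, hz⟩ := adj_of_reachable_ne hr (by simp [Subtype.ext_iff]; exact fun e => hwv e.symm)
      have hadj : G.Adj v ↑z := hz
      have hz1 : (z : V) ∈ S := by simp [hS, hadj]
      have hz2 : (z : V) ∈ (Sᶜ : Finset V) := z.2
      rw [Finset.mem_compl] at hz2
      exact hz2 hz1
    rw [hnc]; exact kappa_le (G := G) (S := S) (Or.inr hd)

end Generic

section Invariance

variable {V W : Type*} [Fintype V] [DecidableEq V] [Fintype W] [DecidableEq W]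
  {G : SimpleGraph V} {H : SimpleGraph W}

lemma threeDominating_image (e : G ≃g H) {S : Finset V} (h : ThreeDominating G S) :
    ThreeDominating H (S.image e) := by
  intro v hv
  have hv' : e.symm v ∉ S := by
    intro hm
    exact hv (Finset.mem_image.mpr ⟨_, hm, e.apply_symm_apply v⟩)
  have h3 := h _ hv'
  have hset : {u | u ∈ S.image e ∧ H.Adj v u} = (⇑e) '' {u | u ∈ S ∧ G.Adj (e.symm v) u} := by
    ext u
    simp only [Set.mem_setOf_eq, Finset.mem_image, Set.mem_image]
    constructor
    · rintro ⟨⟨x, hx, rfl⟩, hadj⟩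
      refine ⟨x, ⟨hx, ?_⟩, rfl⟩
      have : H.Adj (e (e.symm v)) (e x) := by rwa [e.apply_symm_apply]
      exact e.map_adj_iff.mp this
    · rintro ⟨x, ⟨hx, hadj⟩, rfl⟩
      refine ⟨⟨x, hx, rfl⟩, ?_⟩
      have := e.map_adj_iff.mpr hadj
      rwa [e.apply_symm_apply] at this
  rw [hset, Set.ncard_image_of_injective _ e.injective]
  exact h3

lemma gamma3_le_iso (e : G ≃g H) : gamma3 H ≤ gamma3 G := by
  obtain ⟨S, hS, hc⟩ := gamma3_exists (G := G)
  have := gamma3_le (threeDominating_image e hS)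
  rwa [Finset.card_image_of_injective _ e.injective, hc] at this

lemma gamma3_eq_iso (e : G ≃g H) : gamma3 G = gamma3 H :=
  le_antisymm (gamma3_le_iso e.symm) (gamma3_le_iso e)

lemma image_compl (e : G ≃g H) (S : Finset V) :
    ((S.image e)ᶜ : Finset W) = (Sᶜ : Finset V).image e := by
  ext y
  simp only [Finset.mem_compl, Finset.mem_image]
  constructor
  · intro hy
    refine ⟨e.symm y, ?_, e.apply_symm_apply y⟩
    intro hm
    exact hy ⟨_, hm, e.apply_symm_apply y⟩
  · rintro ⟨x, hx, rfl⟩ ⟨x', hx', hee⟩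
    exact hx (e.injective hee ▸ hx')

/-- induced subgraph iso -/
noncomputable def induceIso (e : G ≃g H) (s : Set V) :
    G.induce s ≃g H.induce ((⇑e) '' s) where
  toEquiv := e.toEquiv.image s
  map_rel_iff' := by
    intro a b
    simp only [SimpleGraph.comap_adj, Function.Embedding.coe_subtype, Equiv.image, Equiv.Set.image,
      Equiv.coe_fn_mk]
    exact e.map_adj_iff

lemma kappa_le_iso (e : G ≃g H) : kappa H ≤ kappa G := by
  obtain ⟨S, hc, hd⟩ := kappa_exists (G := G)
  have hcompl := image_compl e S
  have hcard : ((S.image e)ᶜ : Finset W).card = (Sᶜ : Finset V).card := by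
    rw [hcompl, Finset.card_image_of_injective _ e.injective]
  have hsets : (↑((S.image e)ᶜ : Finset W) : Set W) = (⇑e) '' ↑(Sᶜ : Finset V) := by
    rw [hcompl]; simp [Finset.coe_image]
  have hkle := kappa_le (G := H) (S := S.image e) ?_
  · rwa [Finset.card_image_of_injective _ e.injective, hc] at hkle
  rcases hd with h1 | h1
  · exact Or.inl (by omega)
  · refine Or.inr ?_
    rw [hsets]
    intro hcon
    exact h1 (((induceIso e _).connected_iff).mpr hcon)

lemma kappa_eq_iso (e : G ≃g H) : kappa G = kappa H :=
  le_antisymm (kappa_le_iso e.symm) (kappa_le_iso e)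

end Invariance

section Concrete

open SimpleGraph Finset

instance pathGraphAdjDecidable (n : ℕ) : DecidableRel (SimpleGraph.pathGraph n).Adj :=
  fun u v => decidable_of_iff _ (SimpleGraph.pathGraph_adj).symm

lemma gamma3_top4 : gamma3 (⊤ : SimpleGraph (Fin 4)) = 3 := by
  refine le_antisymm ?_ ?_
  · have h := gamma3_le (G := (⊤ : SimpleGraph (Fin 4))) (S := {0, 1, 2})
      (threeDominating_iff.mpr (by decide))
    simpa using h
  · exact three_le_gamma3 (by simp)

lemma kappa_top4 : kappa (⊤ : SimpleGraph (Fin 4)) = 3 := by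
  refine le_antisymm ?_ ?_
  · have := kappa_le_card_sub_one (G := (⊤ : SimpleGraph (Fin 4)))
    simpa using this
  · refine le_kappa ?_
    decide

lemma gamma3_cycle4 : gamma3 (SimpleGraph.cycleGraph 4) = 4 := by
  refine le_antisymm (by simpa using gamma3_le_card (G := SimpleGraph.cycleGraph 4)) ?_
  refine le_gamma3 fun S hS => ?_
  rw [threeDominating_iff] at hS
  revert hS; revert S; decide

lemma kappa_cycle4 : kappa (SimpleGraph.cycleGraph 4) = 2 := by
  refine le_antisymm ?_ (le_kappa (by decide))
  have h := kappa_le (G := SimpleGraph.cycleGraph 4) (S := {1, 3})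
    (Or.inr (fun hc => absurd hc.preconnected (by decide)))
  simpa using h

lemma gamma3_path3 : gamma3 (SimpleGraph.pathGraph 3) = 3 := by
  refine le_antisymm (by simpa using gamma3_le_card (G := SimpleGraph.pathGraph 3))
    (three_le_gamma3 (by simp))

lemma kappa_path3 : kappa (SimpleGraph.pathGraph 3) = 1 := by
  refine le_antisymm ?_ (le_kappa (by decide))
  have h := kappa_le (G := SimpleGraph.pathGraph 3) (S := {1})
    (Or.inr (fun hc => absurd hc.preconnected (by decide)))
  simpa using h

end Concrete

section Construct

variable {V : Type*} [Fintype V] [DecidableEq V] {G : SimpleGraph V}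

lemma connected_pair {u v : V} (h : G.Adj u v) : (G.induce ({u, v} : Set V)).Connected := by
  rw [SimpleGraph.connected_iff]
  refine ⟨?_, ⟨⟨u, by simp⟩⟩⟩
  rintro ⟨x, hx⟩ ⟨y, hy⟩
  simp only [Set.mem_insert_iff, Set.mem_singleton_iff] at hx hy
  rcases hx with rfl | rfl <;> rcases hy with rfl | rfl
  · rfl
  · exact SimpleGraph.Adj.reachable h
  · exact SimpleGraph.Adj.reachable h.symm
  · rfl

lemma nonempty_iso_of_map {n : ℕ} {H : SimpleGraph (Fin n)} (f : Fin n → V)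
    (hinj : Function.Injective f) (hcard : Fintype.card V = n)
    (hadj : ∀ i j, G.Adj (f i) (f j) ↔ H.Adj i j) : Nonempty (G ≃g H) := by
  have hbij : Function.Bijective f :=
    (Fintype.bijective_iff_injective_and_card f).mpr ⟨hinj, by simp [hcard]⟩
  let e := Equiv.ofBijective f hbij
  refine ⟨⟨e.symm, ?_⟩⟩
  intro a b
  have ha : f (e.symm a) = a := e.apply_symm_apply a
  have hb : f (e.symm b) = b := e.apply_symm_apply b
  show H.Adj (e.symm a) (e.symm b) ↔ G.Adj a b
  rw [← hadj, ha, hb]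

lemma nonempty_iso_top (hc : ∀ x y : V, x ≠ y → G.Adj x y) (h4 : Fintype.card V = 4) :
    Nonempty (G ≃g (⊤ : SimpleGraph (Fin 4))) := by
  obtain ⟨e⟩ := (Fintype.card_eq (α := V) (β := Fin 4)).mp (by simp [h4])
  refine ⟨⟨e, ?_⟩⟩
  intro a b
  simp only [SimpleGraph.top_adj, ne_eq, EmbeddingLike.apply_eq_iff_eq]
  exact ⟨fun h => hc a b h, fun h he => G.ne_of_adj h he⟩

lemma exists_adj (hconn : G.Connected) {x y : V} (hxy : x ≠ y) : ∃ z, G.Adj x z :=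
  adj_of_reachable_ne (hconn.preconnected x y) hxy

lemma case_path3 (hconn : G.Connected) (h3 : Fintype.card V = 3) (hk : kappa G = 1) :
    Nonempty (G ≃g SimpleGraph.pathGraph 3) := by
  obtain ⟨S, hSc, hd⟩ := kappa_exists (G := G)
  rw [hk] at hSc
  have hcompl : (Sᶜ : Finset V).card = 2 := by rw [Finset.card_compl, h3, hSc]
  obtain ⟨u, v, huv, hS⟩ := Finset.card_eq_two.mp hcompl
  obtain ⟨w, hw⟩ := Finset.card_eq_one.mp hSc
  have hna : ¬ G.Adj u v := by
    intro hadj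
    rcases hd with h1 | h1
    · omega
    · refine h1 ?_
      have : (↑(Sᶜ : Finset V) : Set V) = ({u, v} : Set V) := by rw [hS]; simp
      rw [this]
      exact connected_pair hadj
  have huS : u ∈ (Sᶜ : Finset V) := by rw [hS]; simp
  have hvS : v ∈ (Sᶜ : Finset V) := by rw [hS]; simp
  have huw : u ≠ w := by
    intro h; rw [Finset.mem_compl, hw, h] at huS; simp at huS
  have hvw : v ≠ w := by
    intro h; rw [Finset.mem_compl, hw, h] at hvS; simp at hvS
  have huniv : ∀ x : V, x = w ∨ x = u ∨ x = v := by
    intro x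
    by_cases hx : x ∈ S
    · left; rw [hw] at hx; simpa using hx
    · right; have : x ∈ (Sᶜ : Finset V) := Finset.mem_compl.mpr hx
      rw [hS] at this; simpa using this
  have hadj_uw : G.Adj u w := by
    obtain ⟨z, hz⟩ := exists_adj hconn huw
    rcases huniv z with rfl | rfl | rfl
    · exact hz
    · exact absurd hz (G.irrefl)
    · exact absurd hz hna
  have hadj_vw : G.Adj v w := by
    obtain ⟨z, hz⟩ := exists_adj hconn hvw
    rcases huniv z with rfl | rfl | rfl
    · exact hz
    · exact absurd hz.symm hna
    · exact absurd hz (G.irrefl)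
  have hna' : ¬ G.Adj v u := fun h => hna h.symm
  refine nonempty_iso_of_map ![u, w, v] ?_ h3 ?_
  · intro i j hij
    fin_cases i <;> fin_cases j <;>
      simp_all [Matrix.cons_val_zero, Matrix.cons_val_one, Matrix.head_cons] <;>
      first
        | rfl
        | (exact huw (by assumption))
        | (exact hvw (by assumption))
        | (exact huv (by assumption))
        | (exact huw (by simp_all))
        | skip
  · intro i j
    fin_cases i <;> fin_cases j <;>
      simp [SimpleGraph.pathGraph_adj, hadj_uw, hadj_vw, hadj_uw.symm, hadj_vw.symm, hna,
        hna', G.irrefl]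

end Construct

section ConstructC4

variable {V : Type*} [Fintype V] [DecidableEq V] {G : SimpleGraph V}

lemma case_cycle4 (h4 : Fintype.card V = 4) (hk : kappa G = 2)
    (hdeg : ∀ v : V, (G.neighborSet v).ncard ≤ 2) :
    Nonempty (G ≃g SimpleGraph.cycleGraph 4) := by
  classical
  have hdeg2 : ∀ v : V, (G.neighborSet v).ncard = 2 := fun v =>
    le_antisymm (hdeg v) (hk ▸ kappa_le_nbr v)
  have hne : Nonempty V := Fintype.card_pos_iff.mp (by omega)
  obtain ⟨a⟩ := hne
  have hfin : ∀ v : V, (G.neighborSet v).toFinset.card = 2 := fun v => by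
    rw [← Set.ncard_eq_toFinset_card']; exact hdeg2 v
  obtain ⟨b, d, hbd, hNa⟩ := Finset.card_eq_two.mp (hfin a)
  have hab : G.Adj a b := by
    have : b ∈ (G.neighborSet a).toFinset := by rw [hNa]; simp
    simpa using this
  have had : G.Adj a d := by
    have : d ∈ (G.neighborSet a).toFinset := by rw [hNa]; simp
    simpa using this
  have hnab : a ≠ b := G.ne_of_adj hab
  have hnad : a ≠ d := G.ne_of_adj had
  have habd_card : ({a, b, d} : Finset V).card = 3 := by
    rw [Finset.card_insert_of_notMem (by simp [hnab, hnad]),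
      Finset.card_insert_of_notMem (by simpa using hbd), Finset.card_singleton]
  have hcompl1 : (({a, b, d} : Finset V)ᶜ).card = 1 := by
    rw [Finset.card_compl, habd_card, h4]
  obtain ⟨c, hc⟩ := Finset.card_eq_one.mp hcompl1
  have hcm : c ∉ ({a, b, d} : Finset V) := by
    have : c ∈ (({a, b, d} : Finset V)ᶜ) := by rw [hc]; simp
    simpa using this
  simp only [Finset.mem_insert, Finset.mem_singleton, not_or] at hcm
  obtain ⟨hca, hcb, hcd⟩ := hcm
  have huniv : ∀ x : V, x = a ∨ x = b ∨ x = d ∨ x = c := by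
    intro x
    by_cases hx : x ∈ ({a, b, d} : Finset V)
    · simp only [Finset.mem_insert, Finset.mem_singleton] at hx; tauto
    · have : x ∈ (({a, b, d} : Finset V)ᶜ) := Finset.mem_compl.mpr hx
      rw [hc] at this; simp at this; tauto
  have hnac : ¬ G.Adj a c := by
    intro h
    have : c ∈ (G.neighborSet a).toFinset := by simpa using h
    rw [hNa] at this
    simp only [Finset.mem_insert, Finset.mem_singleton] at this
    rcases this with h' | h' <;> simp_all
  have hNc_sub : (G.neighborSet c).toFinset ⊆ ({b, d} : Finset V) := by
    intro z hz
    have hzadj : G.Adj c z := by simpa using hz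
    rcases huniv z with rfl | rfl | rfl | rfl
    · exact absurd hzadj.symm hnac
    · simp
    · simp
    · exact absurd hzadj (G.irrefl)
  have hNc : (G.neighborSet c).toFinset = ({b, d} : Finset V) := by
    refine Finset.eq_of_subset_of_card_le hNc_sub ?_
    rw [hfin, Finset.card_insert_of_notMem (by simpa using hbd), Finset.card_singleton]
  have hcb' : G.Adj c b := by
    have : b ∈ (G.neighborSet c).toFinset := by rw [hNc]; simp
    simpa using this
  have hcd' : G.Adj c d := by
    have : d ∈ (G.neighborSet c).toFinset := by rw [hNc]; simp
    simpa using this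
  have hNb_sub : ({a, c} : Finset V) ⊆ (G.neighborSet b).toFinset := by
    intro z hz
    simp only [Finset.mem_insert, Finset.mem_singleton] at hz
    rcases hz with rfl | rfl
    · simpa using hab.symm
    · simpa using hcb'.symm
  have hNb : (G.neighborSet b).toFinset = ({a, c} : Finset V) := by
    refine (Finset.eq_of_subset_of_card_le hNb_sub ?_).symm
    rw [hfin, Finset.card_insert_of_notMem (by simp; exact fun h => hca h.symm), Finset.card_singleton]
  have hnbd : ¬ G.Adj b d := by
    intro h
    have : d ∈ (G.neighborSet b).toFinset := by simpa using h
    rw [hNb] at this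
    simp only [Finset.mem_insert, Finset.mem_singleton] at this
    rcases this with h' | h' <;> simp_all
  have hndb : ¬ G.Adj d b := fun h => hnbd h.symm
  have hnca : ¬ G.Adj c a := fun h => hnac h.symm
  have hba := hab.symm
  have hda := had.symm
  have hbc := hcb'.symm
  have hdc := hcd'.symm
  refine nonempty_iso_of_map ![a, b, c, d] ?_ h4 ?_
  · intro i j hij
    fin_cases i <;> fin_cases j <;> simp_all
  · intro i j
    fin_cases i <;> fin_cases j <;>
      simp [SimpleGraph.cycleGraph_adj, hab, had, hcb', hcd', hba, hda, hbc, hdc,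
        hnac, hnca, hnbd, hndb, G.irrefl] <;> decide

end ConstructC4

theorem stmt_13 {V : Type*} [Fintype V] [DecidableEq V] (G : SimpleGraph V)
    (hconn : G.Connected) (hn : 3 ≤ Fintype.card V) :
    gamma3 G + kappa G = 2 * Fintype.card V - 2 ↔
      (Nonempty (G ≃g (⊤ : SimpleGraph (Fin 4))) ∨
       Nonempty (G ≃g SimpleGraph.cycleGraph 4) ∨
       Nonempty (G ≃g SimpleGraph.pathGraph 3)) := by
  constructor
  · intro heq
    have hne : Nonempty V := Fintype.card_pos_iff.mp (by omega)
    have hs3 : 3 ≤ gamma3 G := three_le_gamma3 hn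
    have hsn : gamma3 G ≤ Fintype.card V := gamma3_le_card
    have hk1 : kappa G ≤ Fintype.card V - 1 := kappa_le_card_sub_one
    rcases (show (kappa G = Fintype.card V - 1 ∧ gamma3 G = Fintype.card V - 1) ∨
        (kappa G = Fintype.card V - 2 ∧ gamma3 G = Fintype.card V) by omega) with
      ⟨hk, hg⟩ | ⟨hk, hg⟩
    · have hcomp : ∀ x y : V, x ≠ y → G.Adj x y := by
        intro x y hxy
        by_contra hna
        have := kappa_le_of_not_adj hxy hna
        omega
      have hn4 : 4 ≤ Fintype.card V := by omega
      obtain ⟨S, -, hScard⟩ := Finset.exists_subset_card_eq (s := (Finset.univ : Finset V)) (n := 3)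
        (by simpa using hn)
      have hdom : ThreeDominating G S := by
        intro v hv
        have : {u | u ∈ S ∧ G.Adj v u} = ↑S := by
          ext u
          simp only [Set.mem_setOf_eq, Finset.coe_sort_coe, Finset.mem_coe,
            and_iff_left_iff_imp]
          intro hu
          exact hcomp v u (fun h => hv (h ▸ hu))
        rw [this, Set.ncard_coe_finset, hScard]
      have := gamma3_le hdom
      have hcard4 : Fintype.card V = 4 := by omega
      exact Or.inl (nonempty_iso_top hcomp hcard4)
    · have hdeg : ∀ v : V, (G.neighborSet v).ncard ≤ 2 := by
        intro v
        by_contra h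
        push_neg at h
        have := gamma3_le_pred (G := G) (v := v) (by omega)
        omega
      have hkd : kappa G ≤ 2 := le_trans (kappa_le_nbr (Classical.arbitrary V)) (hdeg _)
      rcases (show Fintype.card V = 3 ∨ Fintype.card V = 4 by omega) with h3 | h4
      · exact Or.inr (Or.inr (case_path3 hconn h3 (by omega)))
      · exact Or.inr (Or.inl (case_cycle4 h4 (by omega) hdeg))
  · intro h
    rcases h with he | he | he
    · obtain ⟨e⟩ := he
      have h1 : gamma3 G = gamma3 (⊤ : SimpleGraph (Fin 4)) := gamma3_eq_iso e
      have h2 : kappa G = kappa (⊤ : SimpleGraph (Fin 4)) := kappa_eq_iso e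
      have h3 : Fintype.card V = 4 := by
        rw [Fintype.card_congr e.toEquiv]; simp
      rw [h1, h2, h3, gamma3_top4, kappa_top4]
    · obtain ⟨e⟩ := he
      have h1 : gamma3 G = gamma3 (SimpleGraph.cycleGraph 4) := gamma3_eq_iso e
      have h2 : kappa G = kappa (SimpleGraph.cycleGraph 4) := kappa_eq_iso e
      have h3 : Fintype.card V = 4 := by
        rw [Fintype.card_congr e.toEquiv]; simp
      rw [h1, h2, h3, gamma3_cycle4, kappa_cycle4]
    · obtain ⟨e⟩ := he
      have h1 : gamma3 G = gamma3 (SimpleGraph.pathGraph 3) := gamma3_eq_iso e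
      have h2 : kappa G = kappa (SimpleGraph.pathGraph 3) := kappa_eq_iso e
      have h3 : Fintype.card V = 3 := by
        rw [Fintype.card_congr e.toEquiv]; simp
      rw [h1, h2, h3, gamma3_path3, kappa_path3]
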